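/- Let G be a connected finite simple graph on the vertex set {1,…,n} with m edges. Then ara_A(J_G) = m, where ara_A(J_G) is the smallest integer s for which there exist A-homogeneous polynomials F_1,…,F_s ∈ J_G with rad(J_G) = rad((F_1,…,F_s)). -/

import Mathlib

open MvPolynomial

noncomputable section

/-- `f_{pq} = x_p · x_{n+q} − x_q · x_{n+p}` in `K[x_1,…,x_{2n}]`, where the first `n`
variables are indexed by `Fin.castAdd n` and the last `n` variables by `Fin.natAdd n`. -/
def edgeBinomial (K : Type*) [Field K] (n : ℕ) (p q : Fin n) :
    MvPolynomial (Fin (n + n)) K :=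
  X (Fin.castAdd n p) * X (Fin.natAdd n q) - X (Fin.castAdd n q) * X (Fin.natAdd n p)

/-- The binomial edge ideal `J_G` of a graph `G` on the vertex set `{1,…,n}`. -/
def binomialEdgeIdeal (K : Type*) [Field K] {n : ℕ} (G : SimpleGraph (Fin n)) :
    Ideal (MvPolynomial (Fin (n + n)) K) :=
  Ideal.span {f | ∃ p q : Fin n, p < q ∧ G.Adj p q ∧ f = edgeBinomial K n p q}

/-- A binomial is a difference of two monomials. -/
def IsBinomial {K : Type*} [Field K] {m : ℕ} (f : MvPolynomial (Fin m) K) : Prop :=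
  ∃ u v : Fin m →₀ ℕ, f = monomial u (1 : K) - monomial v 1

/-- The arithmetical rank: the smallest `s` such that there are `s` polynomials in `I`
generating `I` up to radical. -/
def ara {K : Type*} [Field K] {m : ℕ} (I : Ideal (MvPolynomial (Fin m) K)) : ℕ :=
  sInf {s | ∃ F : Fin s → MvPolynomial (Fin m) K,
    (∀ i, F i ∈ I) ∧ (Ideal.span (Set.range F)).radical = I.radical}

/-- The binomial arithmetical rank: the smallest `s` such that there are `s` binomials in `I`
generating `I` up to radical. -/
def bar {K : Type*} [Field K] {m : ℕ} (I : Ideal (MvPolynomial (Fin m) K)) : ℕ :=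
  sInf {s | ∃ B : Fin s → MvPolynomial (Fin m) K,
    (∀ i, IsBinomial (B i)) ∧ (∀ i, B i ∈ I) ∧
    (Ideal.span (Set.range B)).radical = I.radical}

/-- The `A`-degree of an exponent vector `u ∈ ℕ^{2n}`:
`deg_A(x^u) = (u_1 + u_{n+1}, …, u_n + u_{2n}) ∈ ℕ^n`. -/
def degA (n : ℕ) (u : Fin (n + n) →₀ ℕ) : Fin n → ℕ :=
  fun i => u (Fin.castAdd n i) + u (Fin.natAdd n i)

/-- A polynomial is `A`-homogeneous if all monomials occurring in it with nonzero
coefficient have the same `A`-degree. -/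
def IsAHomogeneous {K : Type*} [Field K] {n : ℕ} (F : MvPolynomial (Fin (n + n)) K) : Prop :=
  ∀ u ∈ F.support, ∀ v ∈ F.support, degA n u = degA n v

/-- The `A`-homogeneous arithmetical rank. -/
def araA {K : Type*} [Field K] {n : ℕ} (I : Ideal (MvPolynomial (Fin (n + n)) K)) : ℕ :=
  sInf {s | ∃ F : Fin s → MvPolynomial (Fin (n + n)) K,
    (∀ i, F i ∈ I ∧ IsAHomogeneous (F i)) ∧
    (Ideal.span (Set.range F)).radical = I.radical}

namespace AraAux

variable {K : Type*} [Field K] {n : ℕ}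

lemma ca_eq_ca_iff {a r : Fin n} : Fin.castAdd n a = Fin.castAdd n r ↔ a = r := by
  simp only [Fin.ext_iff, Fin.coe_castAdd]

lemma na_eq_na_iff {a r : Fin n} : Fin.natAdd n a = Fin.natAdd n r ↔ a = r := by
  simp only [Fin.ext_iff, Fin.coe_natAdd]
  omega

lemma ca_ne_na (a r : Fin n) : Fin.castAdd n a ≠ Fin.natAdd n r := by
  have h := a.isLt
  intro he
  have h2 := congrArg Fin.val he
  simp only [Fin.coe_castAdd, Fin.coe_natAdd] at h2
  omega

lemma na_ne_ca (a r : Fin n) : Fin.natAdd n a ≠ Fin.castAdd n r := (ca_ne_na r a).symm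

lemma degA_pair (a b r : Fin n) :
    degA n (Finsupp.single (Fin.castAdd n a) 1 + Finsupp.single (Fin.natAdd n b) 1) r
      = (if a = r then 1 else 0) + (if b = r then 1 else 0) := by
  unfold degA
  simp only [Finsupp.add_apply, Finsupp.single_apply,
    if_neg (na_ne_ca b r), if_neg (ca_ne_na a r), ca_eq_ca_iff, na_eq_na_iff,
    add_zero, zero_add]

lemma edgeBinomial_eq (p q : Fin n) :
    edgeBinomial K n p q =
      monomial (Finsupp.single (Fin.castAdd n p) 1 + Finsupp.single (Fin.natAdd n q) 1) (1 : K)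
      - monomial (Finsupp.single (Fin.castAdd n q) 1 + Finsupp.single (Fin.natAdd n p) 1) 1 := by
  simp [edgeBinomial, X, monomial_mul]

lemma isAHom_edgeBinomial (p q : Fin n) : IsAHomogeneous (edgeBinomial K n p q) := by
  classical
  intro u hu v hv
  rw [edgeBinomial_eq] at hu hv
  have hsub := support_sub (Fin (n+n)) (monomial (Finsupp.single (Fin.castAdd n p) 1 + Finsupp.single (Fin.natAdd n q) 1) (1 : K)) (monomial (Finsupp.single (Fin.castAdd n q) 1 + Finsupp.single (Fin.natAdd n p) 1) 1)
  have key : ∀ w ∈ (monomial (Finsupp.single (Fin.castAdd n p) 1 + Finsupp.single (Fin.natAdd n q) 1) (1 : K)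
      - monomial (Finsupp.single (Fin.castAdd n q) 1 + Finsupp.single (Fin.natAdd n p) 1) 1).support,
      degA n w = fun r => (if p = r then 1 else 0) + (if q = r then 1 else 0) := by
    intro w hw
    have := hsub hw
    simp only [support_monomial, if_neg (one_ne_zero (α := K)), Finset.mem_union,
      Finset.mem_singleton] at this
    rcases this with rfl | rfl
    · funext r; rw [degA_pair]
    · funext r; rw [degA_pair]; omega
  rw [key u hu, key v hv]


variable {G : SimpleGraph (Fin n)} [DecidableRel G.Adj]

def pairFinset (G : SimpleGraph (Fin n)) [DecidableRel G.Adj] : Finset (Fin n × Fin n) :=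
  Finset.univ.filter fun pq => pq.1 < pq.2 ∧ G.Adj pq.1 pq.2

lemma mem_pairFinset {pq : Fin n × Fin n} :
    pq ∈ pairFinset G ↔ pq.1 < pq.2 ∧ G.Adj pq.1 pq.2 := by
  simp [pairFinset]

lemma card_pairFinset : (pairFinset G).card = G.edgeFinset.card := by
  classical
  apply Finset.card_bij (s := pairFinset G) (t := G.edgeFinset) (fun (pq : Fin n × Fin n) _ => s(pq.1, pq.2))
  · intro pq hpq
    rw [mem_pairFinset] at hpq
    rw [SimpleGraph.mem_edgeFinset]
    exact hpq.2
  · intro a ha b hb hab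
    rw [mem_pairFinset] at ha hb
    rcases a with ⟨a1, a2⟩; rcases b with ⟨b1, b2⟩
    rw [Sym2.eq_iff] at hab
    rcases hab with ⟨rfl, rfl⟩ | ⟨rfl, rfl⟩
    · rfl
    · exact absurd (ha.1.trans hb.1) (lt_irrefl _)
  · intro e he
    rw [SimpleGraph.mem_edgeFinset] at he
    induction e with
    | _ a b =>
      rw [SimpleGraph.mem_edgeSet] at he
      rcases lt_or_gt_of_ne he.ne with h | h
      · exact ⟨(a, b), mem_pairFinset.mpr ⟨h, he⟩, rfl⟩
      · exact ⟨(b, a), mem_pairFinset.mpr ⟨h, he.symm⟩, Sym2.eq_swap⟩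

lemma edgeBinomial_mem_span {p q : Fin n} (h : p < q) (ha : G.Adj p q) :
    edgeBinomial K n p q ∈ binomialEdgeIdeal K G :=
  Ideal.subset_span ⟨p, q, h, ha, rfl⟩

/-- Upper bound: the edge binomials themselves witness membership of `m`. -/
lemma upper_mem :
    (G.edgeFinset.card) ∈ {s | ∃ F : Fin s → MvPolynomial (Fin (n + n)) K,
      (∀ i, F i ∈ binomialEdgeIdeal K G ∧ IsAHomogeneous (F i)) ∧
      (Ideal.span (Set.range F)).radical = (binomialEdgeIdeal K G).radical} := by
  classical
  rw [← card_pairFinset (G := G)]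
  set e := (pairFinset G).equivFin with he
  refine ⟨fun i => edgeBinomial K n (e.symm i).1.1 (e.symm i).1.2, fun i => ?_, ?_⟩
  · have hmem := (e.symm i).2
    rw [mem_pairFinset] at hmem
    exact ⟨edgeBinomial_mem_span hmem.1 hmem.2, isAHom_edgeBinomial _ _⟩
  · have hspan : Ideal.span (Set.range fun i =>
        edgeBinomial K n (e.symm i).1.1 (e.symm i).1.2) = binomialEdgeIdeal K G := by
      unfold binomialEdgeIdeal
      congr 1
      ext f
      constructor
      · rintro ⟨i, rfl⟩
        have hmem := (e.symm i).2
        rw [mem_pairFinset] at hmem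
        exact ⟨_, _, hmem.1, hmem.2, rfl⟩
      · rintro ⟨p, q, h1, h2, rfl⟩
        exact ⟨e ⟨(p, q), mem_pairFinset.mpr ⟨h1, h2⟩⟩, by simp⟩
    rw [hspan]

set_option linter.unusedSectionVars false

lemma addCases_or (j : Fin (n + n)) :
    (∃ r, j = Fin.castAdd n r) ∨ (∃ r, j = Fin.natAdd n r) :=
  Fin.addCases (fun r => Or.inl ⟨r, rfl⟩) (fun r => Or.inr ⟨r, rfl⟩) j

lemma X0X1 (a b : ℕ) : (X (0 : Fin 2) ^ a * (X 1 * X 0) ^ b : MvPolynomial (Fin 2) K)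
    = monomial (Finsupp.single 0 (a + b) + Finsupp.single 1 b) 1 := by
  have h : (Finsupp.single (0 : Fin 2) a) + (Finsupp.single (1 : Fin 2) b + Finsupp.single 0 b)
      = Finsupp.single 0 (a + b) + Finsupp.single 1 b := by
    ext j
    simp only [Finsupp.add_apply, Finsupp.single_apply]
    split_ifs <;> omega
  rw [mul_pow, X_pow_eq_monomial, X_pow_eq_monomial, X_pow_eq_monomial,
    monomial_mul, monomial_mul, h]
  norm_num

lemma cond1 (a k : ℕ) :
    (Finsupp.single (0 : Fin 2) a + Finsupp.single 1 k = Finsupp.single 0 a) ↔ k = 0 := by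
  constructor
  · intro h
    have h2 := DFunLike.congr_fun h 1
    simpa [Finsupp.single_apply] using h2
  · rintro rfl
    simp

lemma keyA {p q : Fin n} (hpq : p ≠ q) {F : MvPolynomial (Fin (n + n)) K}
    (hF : F ∈ binomialEdgeIdeal K G) (hhom : IsAHomogeneous F)
    {u : Fin (n + n) →₀ ℕ} (hu : u ∈ F.support)
    (hs : ∀ j, u j ≠ 0 → j = Fin.castAdd n p ∨ j = Fin.natAdd n q) :
    0 < degA n u p ∧ 0 < degA n u q ∧ ∀ r, r ≠ p → r ≠ q → degA n u r = 0 := by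
  classical
  have hucq : u (Fin.castAdd n q) = 0 := by
    by_contra h
    rcases hs _ h with h1 | h1
    · exact hpq (ca_eq_ca_iff.mp h1).symm
    · exact ca_ne_na q q h1
  have hunp : u (Fin.natAdd n p) = 0 := by
    by_contra h
    rcases hs _ h with h1 | h1
    · exact na_ne_ca p p h1
    · exact hpq (na_eq_na_iff.mp h1)
  have hur : ∀ r : Fin n, r ≠ p → r ≠ q →
      u (Fin.castAdd n r) = 0 ∧ u (Fin.natAdd n r) = 0 := by
    intro r h1 h2
    constructor
    · by_contra h
      rcases hs _ h with h3 | h3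
      · exact h1 (ca_eq_ca_iff.mp h3)
      · exact ca_ne_na r q h3
    · by_contra h
      rcases hs _ h with h3 | h3
      · exact na_ne_ca r p h3
      · exact h2 (na_eq_na_iff.mp h3)
  have hdr : ∀ r : Fin n, r ≠ p → r ≠ q → degA n u r = 0 := by
    intro r h1 h2
    unfold degA
    rw [(hur r h1 h2).1, (hur r h1 h2).2]
  have hdp : degA n u p = u (Fin.castAdd n p) := by unfold degA; rw [hunp, add_zero]
  have hdq : degA n u q = u (Fin.natAdd n q) := by unfold degA; rw [hucq, zero_add]
  set t : Fin n → MvPolynomial (Fin 2) K :=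
    fun r => if r = p then X 0 else if r = q then 1 else 0 with ht
  set σf : Fin (n + n) → MvPolynomial (Fin 2) K :=
    Fin.addCases t (fun r => X 1 * t r) with hσ
  have hσc : ∀ r : Fin n, σf (Fin.castAdd n r) = t r := fun r => Fin.addCases_left r
  have hσn : ∀ r : Fin n, σf (Fin.natAdd n r) = X 1 * t r := fun r => Fin.addCases_right r
  have htp : t p = X 0 := by rw [ht]; simp
  have htq : t q = 1 := by rw [ht]; simp [Ne.symm hpq]
  have hψF : aeval σf F = 0 := by
    have hle : binomialEdgeIdeal K G ≤ RingHom.ker (aeval σf) := by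
      rw [binomialEdgeIdeal, Ideal.span_le]
      rintro f ⟨a, b, -, -, rfl⟩
      rw [SetLike.mem_coe, RingHom.mem_ker, edgeBinomial]
      simp only [map_sub, map_mul, aeval_X, hσc, hσn]
      ring
    exact RingHom.mem_ker.mp (hle hF)
  have hdeg : ∀ v ∈ F.support, degA n v = degA n u := fun v hv => hhom v hv u hu
  have hcu : coeff u F ≠ 0 := mem_support_iff.mp hu
  -- first claim : 0 < degA n u q
  have hq : 0 < degA n u q := by
    rcases Nat.eq_zero_or_pos (degA n u q) with hq0 | hq0
    swap
    · exact hq0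
    exfalso
    have hvz : ∀ v ∈ F.support, ∀ j, j ≠ Fin.castAdd n p → j ≠ Fin.natAdd n p → v j = 0 := by
      intro v hv j hj1 hj2
      rcases addCases_or j with ⟨r, rfl⟩ | ⟨r, rfl⟩
      · have hr : r ≠ p := fun h => hj1 (by rw [h])
        have h0 : degA n v r = 0 := by
          rw [congrFun (hdeg v hv) r]
          rcases eq_or_ne r q with rfl | hrq
          · exact hq0
          · exact hdr r hr hrq
        have h0' : v (Fin.castAdd n r) + v (Fin.natAdd n r) = 0 := h0
        omega
      · have hr : r ≠ p := fun h => hj2 (by rw [h])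
        have h0 : degA n v r = 0 := by
          rw [congrFun (hdeg v hv) r]
          rcases eq_or_ne r q with rfl | hrq
          · exact hq0
          · exact hdr r hr hrq
        have h0' : v (Fin.castAdd n r) + v (Fin.natAdd n r) = 0 := h0
        omega
    set a := degA n u p with ha
    set w : Fin 2 →₀ ℕ := Finsupp.single 0 a with hw
    have hterm : ∀ v ∈ F.support,
        coeff w (C (coeff v F) * ∏ j ∈ v.support, σf j ^ v j)
          = if v (Fin.natAdd n p) = 0 then coeff v F else 0 := by
      intro v hv
      have hsub : v.support ⊆ {Fin.castAdd n p, Fin.natAdd n p} := by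
        intro j hj
        rw [Finset.mem_insert, Finset.mem_singleton]
        by_contra hcon
        push_neg at hcon
        exact (Finsupp.mem_support_iff.mp hj) (hvz v hv j hcon.1 hcon.2)
      have hprod : ∏ j ∈ v.support, σf j ^ v j
          = σf (Fin.castAdd n p) ^ v (Fin.castAdd n p)
            * σf (Fin.natAdd n p) ^ v (Fin.natAdd n p) := by
        rw [Finset.prod_subset hsub (by
          intro j _ hj
          rw [Finsupp.notMem_support_iff.mp hj, pow_zero])]
        exact Finset.prod_pair (ca_ne_na p p)
      have hvca : v (Fin.castAdd n p) + v (Fin.natAdd n p) = a := by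
        have h0 : degA n v p = a := by rw [congrFun (hdeg v hv) p]
        exact h0
      rw [hprod, hσc, hσn, htp, X0X1, hvca, C_mul_monomial, mul_one, coeff_monomial, hw]
      by_cases h : v (Fin.natAdd n p) = 0
      · rw [if_pos ((cond1 a _).mpr h), if_pos h]
      · rw [if_neg (fun hcon => h ((cond1 a _).mp hcon)), if_neg h]
    have hsum : coeff w (aeval σf F) = coeff u F := by
      rw [aeval_def, algebraMap_eq, eval₂_eq, coeff_sum, Finset.sum_congr rfl hterm,
        Finset.sum_eq_single_of_mem u hu]
      · rw [if_pos hunp]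
      · intro v hv hvne
        have hvu : v (Fin.natAdd n p) = 0 → v = u := by
          intro h0
          have hvca : v (Fin.castAdd n p) + v (Fin.natAdd n p) = a := by
            have h1 : degA n v p = a := by rw [congrFun (hdeg v hv) p]
            exact h1
          ext j
          rcases eq_or_ne j (Fin.castAdd n p) with rfl | hj1
          · have : u (Fin.castAdd n p) = a := hdp.symm
            omega
          · rcases eq_or_ne j (Fin.natAdd n p) with rfl | hj2
            · rw [h0, hunp]
            · rw [hvz v hv j hj1 hj2, hvz u hu j hj1 hj2]
        rcases eq_or_ne (v (Fin.natAdd n p)) 0 with h | h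
        · exact absurd (hvu h) hvne
        · rw [if_neg h]
    rw [hψF, coeff_zero] at hsum
    exact hcu hsum.symm
  -- second claim : 0 < degA n u p
  have hp : 0 < degA n u p := by
    rcases Nat.eq_zero_or_pos (degA n u p) with hp0 | hp0
    swap
    · exact hp0
    exfalso
    have hvz : ∀ v ∈ F.support, ∀ j, j ≠ Fin.castAdd n q → j ≠ Fin.natAdd n q → v j = 0 := by
      intro v hv j hj1 hj2
      rcases addCases_or j with ⟨r, rfl⟩ | ⟨r, rfl⟩
      · have hr : r ≠ q := fun h => hj1 (by rw [h])
        have h0 : degA n v r = 0 := by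
          rw [congrFun (hdeg v hv) r]
          rcases eq_or_ne r p with rfl | hrp
          · exact hp0
          · exact hdr r hrp hr
        have h0' : v (Fin.castAdd n r) + v (Fin.natAdd n r) = 0 := h0
        omega
      · have hr : r ≠ q := fun h => hj2 (by rw [h])
        have h0 : degA n v r = 0 := by
          rw [congrFun (hdeg v hv) r]
          rcases eq_or_ne r p with rfl | hrp
          · exact hp0
          · exact hdr r hrp hr
        have h0' : v (Fin.castAdd n r) + v (Fin.natAdd n r) = 0 := h0
        omega
    set b := degA n u q with hb
    set w : Fin 2 →₀ ℕ := Finsupp.single 1 b with hw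
    have hterm : ∀ v ∈ F.support,
        coeff w (C (coeff v F) * ∏ j ∈ v.support, σf j ^ v j)
          = if v (Fin.natAdd n q) = b then coeff v F else 0 := by
      intro v hv
      have hsub : v.support ⊆ {Fin.castAdd n q, Fin.natAdd n q} := by
        intro j hj
        rw [Finset.mem_insert, Finset.mem_singleton]
        by_contra hcon
        push_neg at hcon
        exact (Finsupp.mem_support_iff.mp hj) (hvz v hv j hcon.1 hcon.2)
      have hprod : ∏ j ∈ v.support, σf j ^ v j
          = σf (Fin.castAdd n q) ^ v (Fin.castAdd n q)
            * σf (Fin.natAdd n q) ^ v (Fin.natAdd n q) := by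
        rw [Finset.prod_subset hsub (by
          intro j _ hj
          rw [Finsupp.notMem_support_iff.mp hj, pow_zero])]
        exact Finset.prod_pair (ca_ne_na q q)
      rw [hprod, hσc, hσn, htq, one_pow, mul_one, one_mul, X_pow_eq_monomial,
        C_mul_monomial, mul_one, coeff_monomial, hw]
      by_cases h : v (Fin.natAdd n q) = b
      · rw [if_pos (by rw [h]), if_pos h]
      · rw [if_neg (fun hcon => h ((Finsupp.single_injective 1) hcon)), if_neg h]
    have hsum : coeff w (aeval σf F) = coeff u F := by
      rw [aeval_def, algebraMap_eq, eval₂_eq, coeff_sum, Finset.sum_congr rfl hterm,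
        Finset.sum_eq_single_of_mem u hu]
      · rw [if_pos hdq.symm]
      · intro v hv hvne
        have hvu : v (Fin.natAdd n q) = b → v = u := by
          intro h0
          have hvca : v (Fin.castAdd n q) + v (Fin.natAdd n q) = b := by
            have h1 : degA n v q = b := by rw [congrFun (hdeg v hv) q]
            exact h1
          ext j
          rcases eq_or_ne j (Fin.natAdd n q) with rfl | hj2
          · have : u (Fin.natAdd n q) = b := hdq.symm
            omega
          · rcases eq_or_ne j (Fin.castAdd n q) with rfl | hj1
            · have : v (Fin.castAdd n q) = 0 := by omega
              rw [this, hucq]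
            · rw [hvz v hv j hj1 hj2, hvz u hu j hj1 hj2]
        rcases eq_or_ne (v (Fin.natAdd n q)) b with h | h
        · exact absurd (hvu h) hvne
        · rw [if_neg h]
    rw [hψF, coeff_zero] at hsum
    exact hcu hsum.symm
  exact ⟨hp, hq, hdr⟩

lemma lower {s : ℕ} (F : Fin s → MvPolynomial (Fin (n + n)) K)
    (hmem : ∀ i, F i ∈ binomialEdgeIdeal K G ∧ IsAHomogeneous (F i))
    (hrad : (Ideal.span (Set.range F)).radical = (binomialEdgeIdeal K G).radical) :
    G.edgeFinset.card ≤ s := by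
  classical
  rw [← card_pairFinset (G := G)]
  have hex : ∀ a ∈ pairFinset G, ∃ i : Fin s, ∃ u ∈ (F i).support,
      ∀ j, u j ≠ 0 → j = Fin.castAdd n a.1 ∨ j = Fin.natAdd n a.2 := by
    intro a ha
    rw [mem_pairFinset] at ha
    obtain ⟨hlt, hadj⟩ := ha
    set ζ : Fin (n + n) → K := fun j =>
      if j = Fin.castAdd n a.1 ∨ j = Fin.natAdd n a.2 then 1 else 0 with hζ
    have h1 : ζ (Fin.castAdd n a.1) = 1 := by simp [hζ]
    have h2 : ζ (Fin.natAdd n a.2) = 1 := by simp [hζ]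
    have h3 : ζ (Fin.castAdd n a.2) = 0 := by
      simp only [hζ]
      refine if_neg ?_
      rintro (h | h)
      · exact (ne_of_gt hlt) (ca_eq_ca_iff.mp h)
      · exact ca_ne_na a.2 a.2 h
    have h4 : ζ (Fin.natAdd n a.1) = 0 := by
      simp only [hζ]
      refine if_neg ?_
      rintro (h | h)
      · exact na_ne_ca a.1 a.1 h
      · exact (ne_of_lt hlt) (na_eq_na_iff.mp h)
    have hfz : eval ζ (edgeBinomial K n a.1 a.2) = 1 := by
      rw [edgeBinomial]
      simp only [map_sub, map_mul, eval_X]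
      rw [h1, h2, h3, h4]
      ring
    have hmemrad : edgeBinomial K n a.1 a.2 ∈ (Ideal.span (Set.range F)).radical := by
      rw [hrad]
      exact Ideal.le_radical (edgeBinomial_mem_span hlt hadj)
    obtain ⟨k, hk⟩ := Ideal.mem_radical_iff.mp hmemrad
    have hne : ∃ i, eval ζ (F i) ≠ 0 := by
      by_contra hall
      push_neg at hall
      have hle : Ideal.span (Set.range F) ≤ RingHom.ker (eval ζ) := by
        rw [Ideal.span_le]
        rintro f ⟨i, rfl⟩
        rw [SetLike.mem_coe, RingHom.mem_ker]
        exact hall i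
      have hk0 := RingHom.mem_ker.mp (hle hk)
      rw [map_pow, hfz, one_pow] at hk0
      exact one_ne_zero hk0
    obtain ⟨i, hi⟩ := hne
    refine ⟨i, ?_⟩
    by_contra hno
    push_neg at hno
    apply hi
    rw [eval_eq]
    apply Finset.sum_eq_zero
    intro v hv
    obtain ⟨j, hj1, hj2⟩ := hno v hv
    have hζj : ζ j = 0 := by
      simp only [hζ]
      exact if_neg (by tauto)
    rw [Finset.prod_eq_zero (Finsupp.mem_support_iff.mpr hj1)
      (by rw [hζj, zero_pow hj1]), mul_zero]
  by_cases hs0 : pairFinset G = ∅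
  · rw [hs0]; simp
  obtain ⟨a0, ha0⟩ := Finset.nonempty_of_ne_empty hs0
  obtain ⟨i0, -⟩ := hex a0 ha0
  set f : Fin n × Fin n → Fin s := fun a =>
    if h : ∃ i : Fin s, ∃ u ∈ (F i).support,
        ∀ j, u j ≠ 0 → j = Fin.castAdd n a.1 ∨ j = Fin.natAdd n a.2
    then h.choose else i0 with hf
  have hfP : ∀ a ∈ pairFinset G, ∃ u ∈ (F (f a)).support,
      ∀ j, u j ≠ 0 → j = Fin.castAdd n a.1 ∨ j = Fin.natAdd n a.2 := by
    intro a ha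
    have h : ∃ i : Fin s, ∃ u ∈ (F i).support,
        ∀ j, u j ≠ 0 → j = Fin.castAdd n a.1 ∨ j = Fin.natAdd n a.2 := hex a ha
    simp only [hf, dif_pos h]
    exact h.choose_spec
  have hinj : Set.InjOn f (pairFinset G) := by
    intro a ha b hb hab
    have haP := mem_pairFinset.mp ha
    have hbP := mem_pairFinset.mp hb
    obtain ⟨u, hu, hus⟩ := hfP a ha
    obtain ⟨v, hv, hvs⟩ := hfP b hb
    rw [← hab] at hv
    obtain ⟨hp1, hq1, hz1⟩ := keyA (G := G) (ne_of_lt haP.1)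
      (hmem (f a)).1 (hmem (f a)).2 hu hus
    obtain ⟨hp2, hq2, hz2⟩ := keyA (G := G) (ne_of_lt hbP.1)
      (hmem (f a)).1 (hmem (f a)).2 hv hvs
    have hd : degA n u = degA n v := (hmem (f a)).2 u hu v hv
    rw [hd] at hp1 hq1 hz1
    have ha1 : a.1 = b.1 ∨ a.1 = b.2 := by
      by_contra hc
      push_neg at hc
      have := hz2 a.1 hc.1 hc.2
      omega
    have ha2 : a.2 = b.1 ∨ a.2 = b.2 := by
      by_contra hc
      push_neg at hc
      have := hz2 a.2 hc.1 hc.2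
      omega
    have hb1 : b.1 = a.1 ∨ b.1 = a.2 := by
      by_contra hc
      push_neg at hc
      have := hz1 b.1 hc.1 hc.2
      omega
    have hb2 : b.2 = a.1 ∨ b.2 = a.2 := by
      by_contra hc
      push_neg at hc
      have := hz1 b.2 hc.1 hc.2
      omega
    have e1 := ha1.imp (congrArg Fin.val) (congrArg Fin.val)
    have e2 := ha2.imp (congrArg Fin.val) (congrArg Fin.val)
    have e3 := hb1.imp (congrArg Fin.val) (congrArg Fin.val)
    have e4 := hb2.imp (congrArg Fin.val) (congrArg Fin.val)
    have l1 : a.1.val < a.2.val := haP.1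
    have l2 : b.1.val < b.2.val := hbP.1
    have : a.1.val = b.1.val ∧ a.2.val = b.2.val := by omega
    exact Prod.ext_iff.mpr ⟨Fin.ext this.1, Fin.ext this.2⟩
  have hcard := Finset.card_le_card_of_injOn f (fun a _ => Finset.mem_univ (f a)) hinj
  simpa using hcard

end AraAux

theorem stmt_6 (K : Type*) [Field K] (n : ℕ) (hn : 0 < n)
    (G : SimpleGraph (Fin n)) [DecidableRel G.Adj] (hconn : G.Connected)
    (m : ℕ) (hm : G.edgeFinset.card = m) :
    araA (binomialEdgeIdeal K G) = m := by
  classical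
  subst hm
  unfold araA
  apply le_antisymm
  · exact Nat.sInf_le AraAux.upper_mem
  · refine le_csInf ⟨_, AraAux.upper_mem⟩ (fun s hs => ?_)
    obtain ⟨F, hmem, hrad⟩ := hs
    exact AraAux.lower F hmem hrad
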